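/- For all nonzero vectors ξ, η ∈ ℝ² and choices of signs ±₁, ±₂ ∈ {+1,-1}, the inequality |±₂⟨ξ⟩⟨η⟩ - (±₁ξ)·η| ≤ C(⟨η⟩ + ⟨η⟩⟨ξ⟩Θ(±₁ξ, ±₂η) + ⟨ξ⟩) holds for an absolute constant C, where Θ denotes the angle between two vectors and ⟨ξ⟩ = (1+|ξ|²)^{1/2}. -/

import Mathlib

open InnerProductGeometry

lemma one_sub_cos_le_two_mul (θ : ℝ) (h0 : 0 ≤ θ) (hπ : θ ≤ Real.pi) :
    1 - Real.cos θ ≤ 2 * θ := by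
  have h1 : Real.cos θ = 2 * Real.cos (θ/2) ^ 2 - 1 := by
    have := Real.cos_two_mul (θ/2)
    rw [show 2 * (θ/2) = θ by ring] at this
    linarith
  have h2 : Real.sin (θ/2) ^ 2 + Real.cos (θ/2) ^ 2 = 1 := Real.sin_sq_add_cos_sq _
  have hs : Real.sin (θ/2) ≤ θ/2 := Real.sin_le (by linarith)
  have hs0 : 0 ≤ Real.sin (θ/2) :=
    Real.sin_nonneg_of_nonneg_of_le_pi (by linarith) (by linarith)
  have hθ4 : θ ≤ 4 := le_trans hπ Real.pi_le_four
  nlinarith [mul_le_mul hs hs hs0 (by linarith : (0:ℝ) ≤ θ/2)]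

lemma key_ineq (s t c θ S T : ℝ) (hs : 0 ≤ s) (ht : 0 ≤ t) (hθ : 0 ≤ θ)
    (hS2 : S ^ 2 = 1 + s ^ 2) (hT2 : T ^ 2 = 1 + t ^ 2) (hS0 : 0 ≤ S) (hT0 : 0 ≤ T)
    (hc1 : c ≤ 1) (hcθ : 1 - c ≤ 2 * θ) :
    |S * T - s * t * c| ≤ 2 * (T + T * S * θ + S) := by
  have hsS : s ≤ S := by nlinarith
  have htT : t ≤ T := by nlinarith
  have hS1 : 1 ≤ S := by nlinarith
  have hT1 : 1 ≤ T := by nlinarith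
  have hTt : T - t ≤ 1 := by nlinarith
  have hSs : S - s ≤ 1 := by nlinarith
  have hst : s * t ≤ S * T := mul_le_mul hsS htT ht hS0
  have h1 : S * T - s * t ≤ S + t := by nlinarith [mul_le_of_le_one_right hS0 hTt]
  have h2 : s * t * (1 - c) ≤ 2 * (S * T * θ) := by
    have e1 : s * t * (1 - c) ≤ s * t * (2 * θ) :=
      mul_le_mul_of_nonneg_left hcθ (mul_nonneg hs ht)
    nlinarith
  rw [abs_le]
  constructor
  · nlinarith [mul_nonneg (mul_nonneg hS0 hT0) hθ, mul_le_mul_of_nonneg_left hc1 (mul_nonneg hs ht)]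
  · nlinarith

theorem stmt_2 :
    ∃ C : ℝ, 0 < C ∧
      ∀ (ε₁ ε₂ : ℝ), (ε₁ = 1 ∨ ε₁ = -1) → (ε₂ = 1 ∨ ε₂ = -1) →
      ∀ ξ η : EuclideanSpace ℝ (Fin 2), ξ ≠ 0 → η ≠ 0 →
        |ε₂ * (Real.sqrt (1 + ‖ξ‖ ^ 2) * Real.sqrt (1 + ‖η‖ ^ 2)) - inner ℝ (ε₁ • ξ) η| ≤
          C * (Real.sqrt (1 + ‖η‖ ^ 2)
            + Real.sqrt (1 + ‖η‖ ^ 2) * Real.sqrt (1 + ‖ξ‖ ^ 2) * angle (ε₁ • ξ) (ε₂ • η)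
            + Real.sqrt (1 + ‖ξ‖ ^ 2)) := by
  refine ⟨2, by norm_num, ?_⟩
  intro ε₁ ε₂ hε₁ hε₂ ξ η hξ hη
  have habs1 : |ε₁| = 1 := by rcases hε₁ with h | h <;> simp [h]
  have habs2 : |ε₂| = 1 := by rcases hε₂ with h | h <;> simp [h]
  set a := ε₁ • ξ with ha
  set b := ε₂ • η with hb
  have hna : ‖a‖ = ‖ξ‖ := by rw [ha, norm_smul, Real.norm_eq_abs, habs1, one_mul]
  have hnb : ‖b‖ = ‖η‖ := by rw [hb, norm_smul, Real.norm_eq_abs, habs2, one_mul]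
  have hξ0 : 0 < ‖ξ‖ := norm_pos_iff.mpr hξ
  have hη0 : 0 < ‖η‖ := norm_pos_iff.mpr hη
  set θ := angle a b with hθdef
  have hcos : (inner ℝ a b : ℝ) = ‖ξ‖ * ‖η‖ * Real.cos θ := by
    rw [hθdef, InnerProductGeometry.cos_angle, hna, hnb]
    field_simp
  have hinner : (inner ℝ a η : ℝ) = ε₂ * inner ℝ a b := by
    rw [hb, real_inner_smul_right]
    rcases hε₂ with h | h <;> subst h <;> ring
  set S := Real.sqrt (1 + ‖ξ‖ ^ 2) with hSdef
  set T := Real.sqrt (1 + ‖η‖ ^ 2) with hTdef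
  have hS2 : S ^ 2 = 1 + ‖ξ‖ ^ 2 := Real.sq_sqrt (by positivity)
  have hT2 : T ^ 2 = 1 + ‖η‖ ^ 2 := Real.sq_sqrt (by positivity)
  have hS0 : 0 ≤ S := Real.sqrt_nonneg _
  have hT0 : 0 ≤ T := Real.sqrt_nonneg _
  have hθ0 : 0 ≤ θ := angle_nonneg a b
  have hθπ : θ ≤ Real.pi := angle_le_pi a b
  have hkey := key_ineq ‖ξ‖ ‖η‖ (Real.cos θ) θ S T hξ0.le hη0.le hθ0 hS2 hT2 hS0 hT0
    (Real.cos_le_one θ) (one_sub_cos_le_two_mul θ hθ0 hθπ)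
  rw [hinner, show ε₂ * (S * T) - ε₂ * inner ℝ a b = ε₂ * (S * T - inner ℝ a b) from by ring,
    abs_mul, habs2, one_mul, hcos]
  exact hkey
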